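/- Let n = 2m ≥ 4 be an even integer and c_n = 2^{n-2}((n-2)/2)! π^{n/2}. Let f ∈ L¹(ℝⁿ) with f ≥ 0, and let v(x) = (1/c_n)∫_{ℝⁿ} log(|x-y|/|y|) f(y) dy, so that -(-Δ)^i v(y) = (|d_i|/c_n)∫_{ℝⁿ} f(z)/|y-z|^{2i} dz > 0 for i = 1, …, m-1 (where d_1 = -(n-2) and d_{i+1} = 2i(n-2i-2) d_i). Then there exists a constant C, depending only on n and ‖f‖_{L¹}, such that for every x ∈ ℝⁿ and every i = 1, …, m-1: 0 < ⨍_{∂B₄(x)} ( -(-Δ)^i v(y) ) dσ(y) ≤ C. -/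

import Mathlib

open MeasureTheory Real Filter Metric
open scoped ENNReal Topology

/-- The constant `c_n = 2^(n-2) * ((n-2)/2)! * pi^(n/2)`. -/
noncomputable def cconst (n : ℕ) : ℝ :=
  2 ^ (n - 2) * (Nat.factorial ((n - 2) / 2)) * Real.pi ^ (n / 2)

/-- The logarithmic potential `v x = (1/c_n) * ∫ log (|x-y|/|y|) f y dy`. -/
noncomputable def logPot (n : ℕ) (f : EuclideanSpace ℝ (Fin n) → ℝ)
    (x : EuclideanSpace ℝ (Fin n)) : ℝ :=
  (1 / cconst n) * ∫ y, Real.log (‖x - y‖ / ‖y‖) * f y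

/-- The Laplacian of `f : ℝ^n → ℝ`, as the trace of the second derivative. -/
noncomputable def laplacian {n : ℕ} (f : EuclideanSpace ℝ (Fin n) → ℝ)
    (x : EuclideanSpace ℝ (Fin n)) : ℝ :=
  ∑ i, iteratedFDeriv ℝ 2 f x ![EuclideanSpace.single i 1, EuclideanSpace.single i 1]

/-- The m-th iterate `(-Δ)^m` of the negative Laplacian. -/
noncomputable def negLapIter {n : ℕ} (m : ℕ) (f : EuclideanSpace ℝ (Fin n) → ℝ) :
    EuclideanSpace ℝ (Fin n) → ℝ :=
  (fun (g : EuclideanSpace ℝ (Fin n) → ℝ) x => -laplacian g x)^[m] f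

/-- The surface measure on the unit sphere of `ℝ^n`, obtained from the polar decomposition of
the Lebesgue measure. -/
noncomputable def sphereMeasure (n : ℕ) :
    MeasureTheory.Measure (Metric.sphere (0 : EuclideanSpace ℝ (Fin n)) 1) :=
  (volume : MeasureTheory.Measure (EuclideanSpace ℝ (Fin n))).toSphere

/-- `ω_{n-1}`, the total surface measure of the unit sphere in `ℝ^n`. -/
noncomputable def omegaN (n : ℕ) : ℝ := (sphereMeasure n Set.univ).toReal

/-- The surface integral `∫_{∂B_s(0)} g dσ`, written in polar coordinates as
`s^{n-1} ∫_{S^{n-1}} g(sθ) dθ`. -/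
noncomputable def sphereIntegral (n : ℕ) (g : EuclideanSpace ℝ (Fin n) → ℝ) (s : ℝ) : ℝ :=
  s ^ (n - 1) * ∫ θ, g (s • (θ : EuclideanSpace ℝ (Fin n))) ∂(sphereMeasure n)

/-- The spherical average `⨍_{∂B_s(0)} g dσ = (1/ω_{n-1}) ∫_{S^{n-1}} g(sθ) dθ`. -/
noncomputable def sphereAvg (n : ℕ) (g : EuclideanSpace ℝ (Fin n) → ℝ) (s : ℝ) : ℝ :=
  (∫ θ, g (s • (θ : EuclideanSpace ℝ (Fin n))) ∂(sphereMeasure n)) / omegaN n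

/-- The coefficients `d_1 = -(n-2)`, `d_{i+1} = 2i(n-2i-2) d_i`. -/
noncomputable def dCoeff (n : ℕ) : ℕ → ℝ
  | 0 => 0
  | 1 => -((n : ℝ) - 2)
  | (i + 2) => 2 * ((i : ℝ) + 1) * ((n : ℝ) - 2 * ((i : ℝ) + 1) - 2) * dCoeff n (i + 1)


open Set
open scoped Pointwise RealInnerProductSpace

instance sphereMeasure_finite (n : ℕ) : IsFiniteMeasure (sphereMeasure n) := by
  unfold sphereMeasure; infer_instance

lemma ahlfors (n : ℕ) (hn : 4 ≤ n) (q : EuclideanSpace ℝ (Fin n)) {r : ℝ}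
    (hr0 : 0 < r) (hr1 : r ≤ 1) :
    sphereMeasure n {θ | ‖(θ : EuclideanSpace ℝ (Fin n)) - q‖ < r} * ENNReal.ofReal r
      ≤ ENNReal.ofReal ((n : ℝ) * 2 ^ n * r ^ n)
        * volume (ball (0 : EuclideanSpace ℝ (Fin n)) 1) := by
  have hdim : Module.finrank ℝ (EuclideanSpace ℝ (Fin n)) = n := finrank_euclideanSpace_fin
  haveI : Nontrivial (EuclideanSpace ℝ (Fin n)) :=
    Module.nontrivial_of_finrank_pos (R := ℝ) (by rw [hdim]; omega)
  set A : Set (sphere (0:EuclideanSpace ℝ (Fin n)) 1) := {θ | ‖(θ : EuclideanSpace ℝ (Fin n)) - q‖ < r} with hA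
  have hAm : MeasurableSet A := by
    have : A = (fun θ : sphere (0:EuclideanSpace ℝ (Fin n)) 1 => (θ : EuclideanSpace ℝ (Fin n))) ⁻¹' (ball q r) := by
      ext θ; simp [hA, Metric.mem_ball, dist_eq_norm]
    rw [this]
    exact measurable_subtype_coe measurableSet_ball
  set A' : Set (EuclideanSpace ℝ (Fin n)) := Subtype.val '' A with hA'
  have hA'sphere : A' ⊆ sphere (0:EuclideanSpace ℝ (Fin n)) 1 := by
    rintro x ⟨θ, _, rfl⟩; exact θ.2
  have hA'norm : ∀ x ∈ A', ‖x‖ = 1 := by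
    intro x hx; simpa [mem_sphere_iff_norm] using hA'sphere hx
  have hA'close : ∀ x ∈ A', ‖x - q‖ < r := by
    rintro x ⟨θ, hθ, rfl⟩; exact hθ
  set S₁ : Set (EuclideanSpace ℝ (Fin n)) := Ioo (0:ℝ) 1 • A' with hS₁
  set S₂ : Set (EuclideanSpace ℝ (Fin n)) := Ioc (0:ℝ) 1 • A' with hS₂
  have hσ : sphereMeasure n A = (n : ℝ≥0∞) * volume S₁ := by
    rw [sphereMeasure, Measure.toSphere_apply' _ hAm, hdim]
  have hS₁ball : S₁ ⊆ ball (0:EuclideanSpace ℝ (Fin n)) 1 := by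
    rintro x ⟨t, ht, a, ha, rfl⟩
    simp only [mem_ball, dist_zero_right, norm_smul, Real.norm_eq_abs, hA'norm a ha,
      abs_of_pos ht.1, mul_one]
    exact ht.2
  have hS₁fin : volume S₁ < ⊤ := (measure_mono hS₁ball).trans_lt measure_ball_lt_top
  have hcov : S₁ ⊆ (Ioo (1-r) (1:ℝ) • A') ∪ ((1-r) • S₂) := by
    rintro x ⟨t, ht, a, ha, rfl⟩
    rcases lt_or_ge (1-r) t with h | h
    · exact Or.inl ⟨t, ⟨h, ht.2⟩, a, ha, rfl⟩
    · have hr' : 0 < 1 - r := lt_of_lt_of_le ht.1 h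
      refine Or.inr ⟨(t/(1-r)) • a,
        ⟨t/(1-r), ⟨div_pos ht.1 hr', div_le_one_of_le₀ h hr'.le⟩, a, ha, rfl⟩, ?_⟩
      show (1-r) • ((t/(1-r)) • a) = t • a
      rw [smul_smul, mul_div_cancel₀ _ hr'.ne']
  have hS₂sub : S₂ ⊆ S₁ ∪ A' := by
    rintro x ⟨t, ht, a, ha, rfl⟩
    rcases lt_or_eq_of_le ht.2 with h | h
    · exact Or.inl ⟨t, ⟨ht.1, h⟩, a, ha, rfl⟩
    · subst h; exact Or.inr (by simpa using ha)
  have hA'null : volume A' = 0 :=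
    measure_mono_null hA'sphere (Measure.addHaar_sphere volume 0 1)
  have hS₂le : volume S₂ ≤ volume S₁ := by
    calc volume S₂ ≤ volume (S₁ ∪ A') := measure_mono hS₂sub
      _ ≤ volume S₁ + volume A' := measure_union_le _ _
      _ = volume S₁ := by rw [hA'null, add_zero]
  have hshell : Ioo (1-r) (1:ℝ) • A' ⊆ ball q (2*r) := by
    rintro x ⟨t, ht, a, ha, rfl⟩
    have htr : 0 ≤ t := by nlinarith [ht.1, ht.2]
    have h1 : ‖t • a - a‖ = 1 - t := by
      have e : t • a - a = (t - 1) • a := by rw [sub_smul, one_smul]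
      rw [e, norm_smul, Real.norm_eq_abs, hA'norm a ha, mul_one,
        abs_of_nonpos (by linarith [ht.2])]
      ring
    have h2 : ‖t • a - q‖ ≤ ‖t • a - a‖ + ‖a - q‖ := norm_sub_le_norm_sub_add_norm_sub _ _ _
    rw [mem_ball, dist_eq_norm]
    have := hA'close a ha
    calc ‖t • a - q‖ ≤ (1 - t) + ‖a - q‖ := by rw [← h1]; exact h2
      _ < r + r := by have := ht.1; have := ht.2; gcongr <;> linarith
      _ = 2 * r := by ring
  -- volume S₂ scaled
  have hsmul : volume ((1-r) • S₂) = ENNReal.ofReal ((1-r)^n) * volume S₂ := by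
    rcases le_or_gt r 1 with h | h
    · rw [Measure.addHaar_smul_of_nonneg volume (by linarith) S₂, hdim]
    · linarith
  have key : volume S₁ ≤ volume (ball q (2*r)) + ENNReal.ofReal ((1-r)^n) * volume S₁ :=
    calc volume S₁ ≤ volume ((Ioo (1-r) (1:ℝ) • A') ∪ ((1-r) • S₂)) := measure_mono hcov
      _ ≤ volume (Ioo (1-r) (1:ℝ) • A') + volume ((1-r) • S₂) := measure_union_le _ _
      _ ≤ volume (ball q (2*r)) + ENNReal.ofReal ((1-r)^n) * volume S₂ := by
          rw [hsmul]; exact add_le_add (measure_mono hshell) le_rfl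
      _ ≤ _ := by gcongr
  -- extract: ofReal r * volume S₁ ≤ volume (ball q (2r))
  have hsub : (1 - ENNReal.ofReal ((1-r)^n)) * volume S₁ ≤ volume (ball q (2*r)) := by
    rw [ENNReal.sub_mul (fun _ _ => hS₁fin.ne), one_mul, tsub_le_iff_right]
    exact key.trans (by rw [add_comm])
  have hrle : ENNReal.ofReal r ≤ 1 - ENNReal.ofReal ((1-r)^n) := by
    rcases le_or_gt (1-r) 0 with h | h
    · have e : (1 - r) = 0 := le_antisymm h (by linarith)
      have : ENNReal.ofReal ((1-r)^n) = 0 := by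
        rw [e, zero_pow (by omega : n ≠ 0), ENNReal.ofReal_zero]
      rw [this, tsub_zero]
      exact ENNReal.ofReal_le_one.mpr hr1
    · have h1 : (1-r)^n ≤ 1 - r := pow_le_of_le_one h.le (by linarith) (by omega)
      have : 1 - ENNReal.ofReal ((1-r)^n) ≥ 1 - ENNReal.ofReal (1-r) := by gcongr
      refine le_trans ?_ this
      rw [← ENNReal.ofReal_one, ← ENNReal.ofReal_sub _ (by linarith)]
      exact ENNReal.ofReal_le_ofReal (by linarith)
  have hmain : ENNReal.ofReal r * volume S₁ ≤ volume (ball q (2*r)) :=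
    le_trans (mul_le_mul_left hrle _) hsub
  -- conclude
  have hball : volume (ball q (2*r)) = ENNReal.ofReal ((2*r)^n) * volume (ball (0:EuclideanSpace ℝ (Fin n)) 1) := by
    rw [Measure.addHaar_ball volume q (by linarith), hdim]
  rw [hσ]
  calc (n : ℝ≥0∞) * volume S₁ * ENNReal.ofReal r
      = (n : ℝ≥0∞) * (ENNReal.ofReal r * volume S₁) := by ring
    _ ≤ (n : ℝ≥0∞) * (ENNReal.ofReal ((2*r)^n) * volume (ball (0:EuclideanSpace ℝ (Fin n)) 1)) := by
        rw [← hball]; exact mul_le_mul_right hmain _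
    _ = ENNReal.ofReal ((n : ℝ) * 2^n * r^n) * volume (ball (0:EuclideanSpace ℝ (Fin n)) 1) := by
        rw [← mul_assoc]
        congr 1
        rw [← ENNReal.ofReal_natCast n, ← ENNReal.ofReal_mul (by positivity : (0:ℝ) ≤ (n:ℝ))]
        congr 1
        rw [mul_pow]
        ring


lemma point_null (n : ℕ) (hn : 4 ≤ n) (q : EuclideanSpace ℝ (Fin n)) :
    sphereMeasure n {θ | (θ : EuclideanSpace ℝ (Fin n)) = q} = 0 := by
  have hm : MeasurableSet {θ : sphere (0:EuclideanSpace ℝ (Fin n)) 1 |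
      (θ : EuclideanSpace ℝ (Fin n)) = q} :=
    measurable_subtype_coe (measurableSet_singleton q)
  rw [sphereMeasure, Measure.toSphere_apply' _ hm]
  have hsub : Ioo (0:ℝ) 1 • (Subtype.val ''
        {θ : sphere (0:EuclideanSpace ℝ (Fin n)) 1 | (θ : EuclideanSpace ℝ (Fin n)) = q})
      ⊆ (Submodule.span ℝ {q} : Submodule ℝ (EuclideanSpace ℝ (Fin n))) := by
    rintro x ⟨t, ht, a, ⟨θ, hθ, rfl⟩, rfl⟩
    rw [show (θ : EuclideanSpace ℝ (Fin n)) = q from hθ]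
    exact Submodule.smul_mem _ t (Submodule.mem_span_singleton_self q)
  have hspan : (Submodule.span ℝ {q} : Submodule ℝ (EuclideanSpace ℝ (Fin n))) ≠ ⊤ := by
    classical
    have hlt : Submodule.span ℝ ({q} : Set (EuclideanSpace ℝ (Fin n))) < ⊤ := by
      apply span_lt_of_subset_of_card_lt_finrank (by simp : ({q}:Set (EuclideanSpace ℝ (Fin n))) ⊆ (⊤:Submodule ℝ (EuclideanSpace ℝ (Fin n))))
      simp [finrank_top, finrank_euclideanSpace_fin]
      omega
    exact hlt.ne
  rw [measure_mono_null hsub (Measure.addHaar_submodule _ _ hspan), mul_zero]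

noncomputable def Kc (n : ℕ) : ℝ≥0∞ :=
  sphereMeasure n Set.univ
    + ENNReal.ofReal ((n:ℝ) * 2^n * 2^n) * 2 * volume (ball (0:EuclideanSpace ℝ (Fin n)) 1)

lemma Kc_lt_top (n : ℕ) : Kc n < ⊤ := by
  have h1 : sphereMeasure n Set.univ < ⊤ := measure_lt_top _ _
  have h2 : volume (ball (0:EuclideanSpace ℝ (Fin n)) 1) < ⊤ := measure_ball_lt_top
  exact ENNReal.add_lt_top.mpr ⟨h1,
    ENNReal.mul_lt_top (ENNReal.mul_lt_top ENNReal.ofReal_lt_top (by norm_num)) h2⟩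

lemma sphere_kernel (n α : ℕ) (hn : 4 ≤ n) (hα1 : 1 ≤ α) (hα : α ≤ n - 2)
    (q : EuclideanSpace ℝ (Fin n)) :
    ∫⁻ θ, ENNReal.ofReal ((‖(θ : EuclideanSpace ℝ (Fin n)) - q‖ ^ α)⁻¹) ∂(sphereMeasure n)
      ≤ Kc n := by
  set σ := sphereMeasure n with hσdef
  set volB := volume (ball (0:EuclideanSpace ℝ (Fin n)) 1) with hvolB
  set U : Set (sphere (0:EuclideanSpace ℝ (Fin n)) 1) :=
    {θ | 1 ≤ ‖(θ : EuclideanSpace ℝ (Fin n)) - q‖} with hU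
  have hUm : MeasurableSet U :=
    ((continuous_subtype_val.sub continuous_const).norm.measurable) measurableSet_Ici
  set A : ℕ → Set (sphere (0:EuclideanSpace ℝ (Fin n)) 1) := fun k =>
    {θ | (2⁻¹:ℝ)^(k+1) ≤ ‖(θ : EuclideanSpace ℝ (Fin n)) - q‖ ∧
      ‖(θ : EuclideanSpace ℝ (Fin n)) - q‖ < (2⁻¹:ℝ)^k} with hA
  have hAm : ∀ k, MeasurableSet (A k) := by
    intro k
    have hc : Measurable (fun θ : sphere (0:EuclideanSpace ℝ (Fin n)) 1 =>
        ‖(θ : EuclideanSpace ℝ (Fin n)) - q‖) :=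
      (continuous_subtype_val.sub continuous_const).norm.measurable
    exact (hc measurableSet_Ici).inter (hc measurableSet_Iio)
  -- pointwise bound
  have hpt : ∀ θ : sphere (0:EuclideanSpace ℝ (Fin n)) 1,
      ENNReal.ofReal ((‖(θ : EuclideanSpace ℝ (Fin n)) - q‖ ^ α)⁻¹)
      ≤ U.indicator (fun _ => (1:ℝ≥0∞)) θ
        + ∑' k, (A k).indicator (fun _ => ENNReal.ofReal ((2:ℝ)^((k+1)*α))) θ := by
    intro θ
    set d := ‖(θ : EuclideanSpace ℝ (Fin n)) - q‖ with hd
    have hd0 : 0 ≤ d := norm_nonneg _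
    rcases le_or_gt 1 d with h1 | h1
    · have hle : ENNReal.ofReal ((d ^ α)⁻¹) ≤ 1 := by
        rw [ENNReal.ofReal_le_one]
        exact inv_le_one_of_one_le₀ (one_le_pow₀ h1)
      calc ENNReal.ofReal ((d ^ α)⁻¹) ≤ 1 := hle
        _ = U.indicator (fun _ => (1:ℝ≥0∞)) θ := (Set.indicator_of_mem (show θ ∈ U from h1) (fun _ => (1:ℝ≥0∞))).symm
        _ ≤ _ := le_self_add
    · rcases eq_or_lt_of_le hd0 with h0 | h0
      · have hz : d ^ α = 0 := by rw [← h0, zero_pow (by omega : α ≠ 0)]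
        rw [hz, inv_zero, ENNReal.ofReal_zero]
        exact zero_le
      · have hex : ∃ k : ℕ, (2⁻¹:ℝ)^(k+1) ≤ d := by
          obtain ⟨N, hN⟩ := exists_pow_lt_of_lt_one h0 (by norm_num : (2⁻¹:ℝ) < 1)
          exact ⟨N, le_trans (pow_le_pow_of_le_one (by norm_num) (by norm_num)
            (Nat.le_succ N)) hN.le⟩
        set k := Nat.find hex with hk
        have hk1 : (2⁻¹:ℝ)^(k+1) ≤ d := Nat.find_spec hex
        have hk2 : d < (2⁻¹:ℝ)^k := by
          rcases Nat.eq_zero_or_pos k with h | h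
          · rw [h, pow_zero]; exact h1
          · have hmin := Nat.find_min hex (m := k - 1) (by omega)
            push_neg at hmin
            have e : k - 1 + 1 = k := by omega
            rwa [e] at hmin
        have hmem : θ ∈ A k := ⟨hk1, hk2⟩
        have hb : ENNReal.ofReal ((d ^ α)⁻¹) ≤ ENNReal.ofReal ((2:ℝ)^((k+1)*α)) := by
          apply ENNReal.ofReal_le_ofReal
          have hpow : ((2⁻¹:ℝ)^(k+1))^α ≤ d^α :=
            pow_le_pow_left₀ (by positivity) hk1 α
          have hppos : (0:ℝ) < ((2⁻¹:ℝ)^(k+1))^α := by positivity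
          calc (d ^ α)⁻¹ ≤ (((2⁻¹:ℝ)^(k+1))^α)⁻¹ := by
                exact inv_anti₀ hppos hpow
            _ = (2:ℝ)^((k+1)*α) := by
                rw [← pow_mul, inv_pow, inv_inv]
        calc ENNReal.ofReal ((d ^ α)⁻¹) ≤ ENNReal.ofReal ((2:ℝ)^((k+1)*α)) := hb
          _ = (A k).indicator (fun _ => ENNReal.ofReal ((2:ℝ)^((k+1)*α))) θ :=
              (Set.indicator_of_mem hmem (fun _ => ENNReal.ofReal ((2:ℝ)^((k+1)*α)))).symm
          _ ≤ ∑' j, (A j).indicator (fun _ => ENNReal.ofReal ((2:ℝ)^((j+1)*α))) θ :=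
              ENNReal.le_tsum k
          _ ≤ _ := le_add_self
  -- per-annulus bound
  have hterm : ∀ k : ℕ, ENNReal.ofReal ((2:ℝ)^((k+1)*α)) * σ (A k)
      ≤ ENNReal.ofReal ((n:ℝ)*2^n*2^n) * (2⁻¹:ℝ≥0∞)^k * volB := by
    intro k
    have hr0 : (0:ℝ) < (2⁻¹:ℝ)^k := by positivity
    have hr1 : (2⁻¹:ℝ)^k ≤ 1 := pow_le_one₀ (by norm_num) (by norm_num)
    have hsub : A k ⊆ {θ : sphere (0:EuclideanSpace ℝ (Fin n)) 1 |
        ‖(θ : EuclideanSpace ℝ (Fin n)) - q‖ < (2⁻¹:ℝ)^k} := fun θ hθ => hθ.2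
    have hAbound : σ (A k) * ENNReal.ofReal ((2⁻¹:ℝ)^k)
        ≤ ENNReal.ofReal ((n:ℝ) * 2^n * ((2⁻¹:ℝ)^k)^n) * volB :=
      le_trans (mul_le_mul_left (measure_mono hsub) _) (ahlfors n hn q hr0 hr1)
    have hne0 : ENNReal.ofReal ((2⁻¹:ℝ)^k) ≠ 0 := by
      simp [ENNReal.ofReal_eq_zero, not_le, hr0]
    have hσle : σ (A k) ≤ ENNReal.ofReal ((n:ℝ) * 2^n * ((2⁻¹:ℝ)^k)^n) * volB
        * (ENNReal.ofReal ((2⁻¹:ℝ)^k))⁻¹ := by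
      rw [← ENNReal.le_div_iff_mul_le (Or.inl hne0) (Or.inl ENNReal.ofReal_ne_top)] at hAbound
      rwa [div_eq_mul_inv] at hAbound
    -- real inequality
    have hX : (0:ℝ) < (2:ℝ)^k := by positivity
    have hXn : (0:ℝ) < ((2:ℝ)^k)^n := by positivity
    have hnat : (k+1)*α + k + k ≤ n + k*n := by
      have h1 : (k+1)*α ≤ (k+1)*(n-2) := Nat.mul_le_mul_left _ hα
      have h2 : (k+1)*(n-2) + (k+1)*2 = (k+1)*n := by
        rw [← Nat.mul_add, Nat.sub_add_cancel (by omega)]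
      have h3 : (k+1)*n = k*n + n := by ring
      omega
    have key : (2:ℝ)^((k+1)*α) * 2^k * 2^k ≤ 2^n * ((2:ℝ)^k)^n := by
      rw [← pow_mul, ← pow_add, ← pow_add, ← pow_add]
      exact pow_le_pow_right₀ one_le_two hnat
    have hreal : (2:ℝ)^((k+1)*α) * ((n:ℝ)*2^n*((2⁻¹:ℝ)^k)^n) * ((2⁻¹:ℝ)^k)⁻¹
        ≤ (n:ℝ)*2^n*2^n*(2⁻¹:ℝ)^k := by
      rw [inv_pow, inv_inv, inv_pow]
      have e1 : (2:ℝ)^((k+1)*α) * ((n:ℝ)*2^n*(((2:ℝ)^k)^n)⁻¹) * (2:ℝ)^k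
          = ((2:ℝ)^((k+1)*α) * ((n:ℝ)*2^n) * (2:ℝ)^k) / ((2:ℝ)^k)^n := by
        field_simp
      have e2 : (n:ℝ)*2^n*2^n*((2:ℝ)^k)⁻¹ = ((n:ℝ)*2^n*2^n) / (2:ℝ)^k := by
        rw [div_eq_mul_inv]
      rw [e1, e2, div_le_div_iff₀ hXn hX]
      calc (2:ℝ)^((k+1)*α) * ((n:ℝ)*2^n) * (2:ℝ)^k * (2:ℝ)^k
          = ((n:ℝ)*2^n) * ((2:ℝ)^((k+1)*α) * 2^k * 2^k) := by ring
        _ ≤ ((n:ℝ)*2^n) * (2^n * ((2:ℝ)^k)^n) := by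
            apply mul_le_mul_of_nonneg_left key (by positivity)
        _ = (n:ℝ)*2^n*2^n * ((2:ℝ)^k)^n := by ring
    -- assemble
    have hofreal : ENNReal.ofReal ((2⁻¹:ℝ)^k) = (2⁻¹:ℝ≥0∞)^k := by
      rw [ENNReal.ofReal_pow (by norm_num : (0:ℝ) ≤ 2⁻¹)]
      congr 1
      rw [ENNReal.ofReal_inv_of_pos two_pos, ENNReal.ofReal_ofNat]
    calc ENNReal.ofReal ((2:ℝ)^((k+1)*α)) * σ (A k)
        ≤ ENNReal.ofReal ((2:ℝ)^((k+1)*α))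
          * (ENNReal.ofReal ((n:ℝ) * 2^n * ((2⁻¹:ℝ)^k)^n) * volB
          * (ENNReal.ofReal ((2⁻¹:ℝ)^k))⁻¹) := mul_le_mul_right hσle _
      _ = ENNReal.ofReal ((2:ℝ)^((k+1)*α) * ((n:ℝ) * 2^n * ((2⁻¹:ℝ)^k)^n)
          * ((2⁻¹:ℝ)^k)⁻¹) * volB := by
          rw [ENNReal.ofReal_mul
              (by positivity : (0:ℝ) ≤ (2:ℝ)^((k+1)*α) * ((n:ℝ)*2^n*((2⁻¹:ℝ)^k)^n)),
            ENNReal.ofReal_mul (by positivity : (0:ℝ) ≤ (2:ℝ)^((k+1)*α)),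
            ENNReal.ofReal_inv_of_pos hr0]
          ring
      _ ≤ ENNReal.ofReal ((n:ℝ)*2^n*2^n * (2⁻¹:ℝ)^k) * volB :=
          mul_le_mul_left (ENNReal.ofReal_le_ofReal hreal) _
      _ = ENNReal.ofReal ((n:ℝ)*2^n*2^n) * (2⁻¹:ℝ≥0∞)^k * volB := by
          rw [ENNReal.ofReal_mul (by positivity : (0:ℝ) ≤ (n:ℝ)*2^n*2^n), hofreal]
  -- integrate
  calc ∫⁻ θ, ENNReal.ofReal ((‖(θ : EuclideanSpace ℝ (Fin n)) - q‖ ^ α)⁻¹) ∂σ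
      ≤ ∫⁻ θ, (U.indicator (fun _ => (1:ℝ≥0∞)) θ
        + ∑' k, (A k).indicator (fun _ => ENNReal.ofReal ((2:ℝ)^((k+1)*α))) θ) ∂σ :=
        lintegral_mono hpt
    _ = (∫⁻ θ, U.indicator (fun _ => (1:ℝ≥0∞)) θ ∂σ)
        + ∫⁻ θ, (∑' k, (A k).indicator (fun _ => ENNReal.ofReal ((2:ℝ)^((k+1)*α))) θ) ∂σ := by
        rw [lintegral_add_left (measurable_const.indicator hUm)]
    _ ≤ σ Set.univ + ∑' k, ENNReal.ofReal ((2:ℝ)^((k+1)*α)) * σ (A k) := by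
        gcongr
        · calc ∫⁻ θ, U.indicator (fun _ => (1:ℝ≥0∞)) θ ∂σ = σ U := lintegral_indicator_one hUm
            _ ≤ σ Set.univ := measure_mono (subset_univ U)
        · rw [lintegral_tsum (fun k => (measurable_const.indicator (hAm k)).aemeasurable)]
          apply ENNReal.tsum_le_tsum
          intro k
          rw [lintegral_indicator (hAm k), setLIntegral_const]
    _ ≤ σ Set.univ + ∑' k, ENNReal.ofReal ((n:ℝ)*2^n*2^n) * (2⁻¹:ℝ≥0∞)^k * volB := by
        exact add_le_add le_rfl (ENNReal.tsum_le_tsum hterm)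
    _ ≤ Kc n := by
        rw [Kc, ← hσdef, ← hvolB]
        gcongr
        have e : ∀ k : ℕ, ENNReal.ofReal ((n:ℝ)*2^n*2^n) * (2⁻¹:ℝ≥0∞)^k * volB
            = (ENNReal.ofReal ((n:ℝ)*2^n*2^n) * volB) * (2⁻¹:ℝ≥0∞)^k := fun k => by ring
        calc ∑' k, ENNReal.ofReal ((n:ℝ)*2^n*2^n) * (2⁻¹:ℝ≥0∞)^k * volB
            = ∑' k : ℕ, (ENNReal.ofReal ((n:ℝ)*2^n*2^n) * volB) * (2⁻¹:ℝ≥0∞)^k := by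
              exact tsum_congr e
          _ = (ENNReal.ofReal ((n:ℝ)*2^n*2^n) * volB) * ∑' k : ℕ, (2⁻¹:ℝ≥0∞)^k :=
              ENNReal.tsum_mul_left
          _ = (ENNReal.ofReal ((n:ℝ)*2^n*2^n) * volB) * 2 := by
              rw [ENNReal.tsum_geometric, ENNReal.one_sub_inv_two, inv_inv]
          _ = ENNReal.ofReal ((n:ℝ)*2^n*2^n) * 2 * volB := by ring
          _ ≤ ENNReal.ofReal ((n:ℝ)*2^n*2^n) * 2 * volB := le_rfl

lemma sphere_kernel4 (n α : ℕ) (hn : 4 ≤ n) (hα1 : 1 ≤ α) (hα : α ≤ n - 2)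
    (p : EuclideanSpace ℝ (Fin n)) :
    ∫⁻ θ, ENNReal.ofReal
        ((‖p - (4:ℝ) • (θ : EuclideanSpace ℝ (Fin n))‖ ^ α)⁻¹) ∂(sphereMeasure n)
      ≤ Kc n := by
  have hnorm : ∀ θ : sphere (0:EuclideanSpace ℝ (Fin n)) 1,
      ‖(θ : EuclideanSpace ℝ (Fin n))‖ = 1 := fun θ => by
    simpa [mem_sphere_iff_norm] using θ.2
  rcases eq_or_ne p 0 with rfl | hp
  · have hle : ∀ θ : sphere (0:EuclideanSpace ℝ (Fin n)) 1,
        ENNReal.ofReal ((‖(0:EuclideanSpace ℝ (Fin n))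
          - (4:ℝ) • (θ : EuclideanSpace ℝ (Fin n))‖ ^ α)⁻¹) ≤ 1 := by
      intro θ
      have h4 : ‖(0:EuclideanSpace ℝ (Fin n)) - (4:ℝ) • (θ : EuclideanSpace ℝ (Fin n))‖
          = 4 := by
        rw [zero_sub, norm_neg, norm_smul, hnorm θ]
        norm_num
      rw [h4, ENNReal.ofReal_le_one]
      exact inv_le_one_of_one_le₀ (one_le_pow₀ (by norm_num))
    calc ∫⁻ θ, ENNReal.ofReal ((‖(0:EuclideanSpace ℝ (Fin n))
          - (4:ℝ) • (θ : EuclideanSpace ℝ (Fin n))‖ ^ α)⁻¹) ∂(sphereMeasure n)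
        ≤ ∫⁻ _θ, 1 ∂(sphereMeasure n) := lintegral_mono hle
      _ = sphereMeasure n Set.univ := by rw [lintegral_one]
      _ ≤ Kc n := le_self_add
  · set q := ‖p‖⁻¹ • p with hq
    have hρ : 0 < ‖p‖ := norm_pos_iff.mpr hp
    have hqnorm : ‖q‖ = 1 := by
      rw [hq, norm_smul, norm_inv, norm_norm, inv_mul_cancel₀ hρ.ne']
    have hpq : p = ‖p‖ • q := by rw [hq, smul_inv_smul₀ hρ.ne']
    -- geometric inequality
    have hgeom : ∀ θ : sphere (0:EuclideanSpace ℝ (Fin n)) 1,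
        ‖(θ : EuclideanSpace ℝ (Fin n)) - q‖
          ≤ ‖p - (4:ℝ) • (θ : EuclideanSpace ℝ (Fin n))‖ := by
      intro θ
      set x := (θ : EuclideanSpace ℝ (Fin n))
      set ρ := ‖p‖
      set t := ⟪x, q⟫
      have ht1 : t ≤ 1 := by
        have := real_inner_le_norm x q
        rwa [hnorm θ, hqnorm, one_mul] at this
      have ht2 : -1 ≤ t := by
        have h := abs_real_inner_le_norm x q
        rw [hnorm θ, hqnorm, one_mul] at h
        exact neg_le_of_abs_le h
      have hip : ⟪p, (4:ℝ) • x⟫ = 4*ρ*t := by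
        rw [hpq, real_inner_smul_left, real_inner_smul_right]
        have hcomm : ⟪q, x⟫ = t := by rw [real_inner_comm]
        rw [hcomm]
        ring
      have h4x : ‖(4:ℝ) • x‖ = 4 := by
        rw [norm_smul, hnorm θ]; norm_num
      have hnp : ‖p‖ = ρ := rfl
      have e1 : ‖p - (4:ℝ) • x‖^2 = ρ^2 - 8*ρ*t + 16 := by
        rw [norm_sub_sq_real, hip, h4x, hnp]
        ring
      have e2 : ‖x - q‖^2 = 2 - 2*t := by
        rw [norm_sub_sq_real, hnorm θ, hqnorm]
        ring
      have hsq : ‖x - q‖^2 ≤ ‖p - (4:ℝ) • x‖^2 := by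
        rw [e1, e2]
        nlinarith [sq_nonneg (ρ - 4), sq_nonneg (ρ + 4), hρ,
          mul_nonneg hρ.le (by linarith : (0:ℝ) ≤ 1 - t),
          mul_nonneg hρ.le (by linarith : (0:ℝ) ≤ 1 + t)]
      exact (pow_le_pow_iff_left₀ (norm_nonneg _) (norm_nonneg _) (by norm_num)).mp hsq
    have hae : ∀ᵐ θ : Metric.sphere (0:EuclideanSpace ℝ (Fin n)) 1 ∂(sphereMeasure n), (θ : EuclideanSpace ℝ (Fin n)) ≠ q := by
      have h0 := (MeasureTheory.measure_eq_zero_iff_ae_notMem (μ := sphereMeasure n)).mp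
        (point_null n hn q)
      filter_upwards [h0] with θ hθ
      exact hθ
    have hmono : ∀ᵐ θ : Metric.sphere (0:EuclideanSpace ℝ (Fin n)) 1 ∂(sphereMeasure n),
        ENNReal.ofReal ((‖p - (4:ℝ) • (θ : EuclideanSpace ℝ (Fin n))‖ ^ α)⁻¹)
          ≤ ENNReal.ofReal ((‖(θ : EuclideanSpace ℝ (Fin n)) - q‖ ^ α)⁻¹) := by
      filter_upwards [hae] with θ hθ
      apply ENNReal.ofReal_le_ofReal
      have hpos : 0 < ‖(θ : EuclideanSpace ℝ (Fin n)) - q‖ :=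
        norm_pos_iff.mpr (sub_ne_zero.mpr hθ)
      exact inv_anti₀ (by positivity) (pow_le_pow_left₀ hpos.le (hgeom θ) α)
    exact le_trans (lintegral_mono_ae hmono) (sphere_kernel n α hn hα1 hα q)


lemma cconst_pos (n : ℕ) : 0 < cconst n := by
  unfold cconst
  have h1 : (0:ℝ) < (Nat.factorial ((n - 2) / 2) : ℝ) :=
    Nat.cast_pos.mpr (Nat.factorial_pos _)
  positivity

lemma omegaN_pos (n : ℕ) (hn : 4 ≤ n) : 0 < omegaN n := by
  have hdim : Module.finrank ℝ (EuclideanSpace ℝ (Fin n)) = n := finrank_euclideanSpace_fin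
  haveI : Nontrivial (EuclideanSpace ℝ (Fin n)) :=
    Module.nontrivial_of_finrank_pos (R := ℝ) (by rw [hdim]; omega)
  have huniv : sphereMeasure n Set.univ
      = (n : ℝ≥0∞) * volume (ball (0:EuclideanSpace ℝ (Fin n)) 1) := by
    rw [sphereMeasure, Measure.toSphere_apply_univ, hdim]
  apply ENNReal.toReal_pos
  · rw [huniv]
    exact (mul_ne_zero (by exact_mod_cast (by omega : n ≠ 0))
      (measure_ball_pos volume _ one_pos).ne')
  · exact (measure_lt_top _ _).ne

lemma sphereMeasure_univ_pos (n : ℕ) (hn : 4 ≤ n) : 0 < sphereMeasure n Set.univ := by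
  have := omegaN_pos n hn
  rw [omegaN] at this
  exact ENNReal.toReal_pos_iff.mp this |>.1


/-- Uniform two-sided bound on the spherical averages `⨍_{∂B₄(x)} (-(-Δ)^i v) dσ`,
`i = 1, …, m-1`, for the logarithmic potential `v` of a nonnegative `L¹` function `f`. -/
theorem stmt17 (m n : ℕ) (hm : 2 ≤ m) (hn : n = 2 * m)
    (f : EuclideanSpace ℝ (Fin n) → ℝ) (hf : MeasureTheory.Integrable f)
    (hpos : ∀ y, 0 ≤ f y)
    (hformula : ∀ i : ℕ, 1 ≤ i → i ≤ m - 1 → ∀ y : EuclideanSpace ℝ (Fin n),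
      -(negLapIter i (logPot n f) y)
          = (|dCoeff n i| / cconst n) * ∫ z, f z / ‖y - z‖ ^ (2 * i) ∧
        0 < -(negLapIter i (logPot n f) y)) :
    ∃ C : ℝ, ∀ x : EuclideanSpace ℝ (Fin n), ∀ i : ℕ, 1 ≤ i → i ≤ m - 1 →
      0 < sphereAvg n (fun y => -(negLapIter i (logPot n f) (x + y))) 4 ∧
      sphereAvg n (fun y => -(negLapIter i (logPot n f) (x + y))) 4 ≤ C := by
  have hn4 : 4 ≤ n := by omega
  set σ := sphereMeasure n with hσdef
  -- measurable version of f
  set f' : EuclideanSpace ℝ (Fin n) → ℝ := hf.1.aemeasurable.mk f with hf'def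
  have hf'meas : Measurable f' := hf.1.aemeasurable.measurable_mk
  have hff' : f =ᵐ[volume] f' := hf.1.aemeasurable.ae_eq_mk
  -- finite total mass
  have hIf : ∫⁻ z, ENNReal.ofReal (f' z) < ⊤ := by
    have h1 : ∫⁻ z, ENNReal.ofReal (f' z) = ∫⁻ z, ENNReal.ofReal (f z) := by
      apply lintegral_congr_ae
      filter_upwards [hff'] with z hz
      rw [hz]
    rw [h1]
    calc ∫⁻ z, ENNReal.ofReal (f z) ≤ ∫⁻ z, (‖f z‖₊ : ℝ≥0∞) := by
          apply lintegral_mono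
          intro z
          show ENNReal.ofReal (f z) ≤ (‖f z‖₊ : ℝ≥0∞)
          rw [← ENNReal.ofReal_coe_nnreal, coe_nnnorm]
          exact ENNReal.ofReal_le_ofReal (le_abs_self _)
      _ < ⊤ := hf.2
  -- the potential in ENNReal form
  set Φ : ℕ → EuclideanSpace ℝ (Fin n) → ℝ≥0∞ := fun i y =>
    ∫⁻ z, ENNReal.ofReal (f' z) * ENNReal.ofReal ((‖y - z‖ ^ (2*i))⁻¹) with hΦdef
  have hΦmeas : ∀ i, Measurable (Φ i) := by
    intro i
    apply Measurable.lintegral_prod_right (f := fun y z =>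
      ENNReal.ofReal (f' z) * ENNReal.ofReal ((‖y - z‖ ^ (2*i))⁻¹))
    apply Measurable.mul (f := fun p : EuclideanSpace ℝ (Fin n) × EuclideanSpace ℝ (Fin n) => ENNReal.ofReal (f' p.2)) (g := fun p : EuclideanSpace ℝ (Fin n) × EuclideanSpace ℝ (Fin n) => ENNReal.ofReal ((‖p.1 - p.2‖ ^ (2*i))⁻¹))
    · exact (hf'meas.comp measurable_snd).ennreal_ofReal
    · exact ((((continuous_fst.sub continuous_snd).norm.pow _).measurable).inv).ennreal_ofReal
  have hlink : ∀ i y, (∫ z, f z / ‖y - z‖ ^ (2*i)) = (Φ i y).toReal := by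
    intro i y
    rw [integral_eq_lintegral_of_nonneg_ae]
    · congr 1
      apply lintegral_congr_ae
      filter_upwards [hff'] with z hz
      rw [div_eq_mul_inv, ENNReal.ofReal_mul (hpos z), hz]
    · exact Eventually.of_forall fun z => div_nonneg (hpos z) (by positivity)
    · exact (hf.1.aemeasurable.div
        ((continuous_const.sub continuous_id).norm.pow _).measurable.aemeasurable).aestronglyMeasurable
  -- kernel bound for the sphere integral
  have hiK : ∀ (i : ℕ), 1 ≤ i → i ≤ m - 1 → ∀ x : EuclideanSpace ℝ (Fin n),
      ∫⁻ θ, Φ i (x + (4:ℝ) • (θ : EuclideanSpace ℝ (Fin n))) ∂σ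
        ≤ Kc n * ∫⁻ z, ENNReal.ofReal (f' z) := by
    intro i hi1 hi2 x
    have hα1 : 1 ≤ 2*i := by omega
    have hα2 : 2*i ≤ n - 2 := by omega
    have hWmeas : Measurable (Function.uncurry fun
        (θ : Metric.sphere (0:EuclideanSpace ℝ (Fin n)) 1) z =>
        ENNReal.ofReal (f' z) * ENNReal.ofReal
          ((‖x + (4:ℝ) • (θ : EuclideanSpace ℝ (Fin n)) - z‖ ^ (2*i))⁻¹)) := by
      apply Measurable.mul (f := fun p : Metric.sphere (0:EuclideanSpace ℝ (Fin n)) 1 × EuclideanSpace ℝ (Fin n) => ENNReal.ofReal (f' p.2)) (g := fun p : Metric.sphere (0:EuclideanSpace ℝ (Fin n)) 1 × EuclideanSpace ℝ (Fin n) => ENNReal.ofReal ((‖x + (4:ℝ) • (p.1 : EuclideanSpace ℝ (Fin n)) - p.2‖ ^ (2*i))⁻¹))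
      · exact (hf'meas.comp measurable_snd).ennreal_ofReal
      · have hc : Continuous (fun p : Metric.sphere (0:EuclideanSpace ℝ (Fin n)) 1 ×
            EuclideanSpace ℝ (Fin n) =>
            ‖x + (4:ℝ) • (p.1 : EuclideanSpace ℝ (Fin n)) - p.2‖ ^ (2*i)) := by
          apply Continuous.pow
          exact ((continuous_const.add
            (((continuous_subtype_val.comp continuous_fst)).const_smul (4:ℝ))).sub
            continuous_snd).norm
        exact (hc.measurable.inv).ennreal_ofReal
    calc ∫⁻ θ, Φ i (x + (4:ℝ) • (θ : EuclideanSpace ℝ (Fin n))) ∂σ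
        = ∫⁻ z, ∫⁻ θ, ENNReal.ofReal (f' z) * ENNReal.ofReal
            ((‖x + (4:ℝ) • (θ : EuclideanSpace ℝ (Fin n)) - z‖ ^ (2*i))⁻¹) ∂σ := by
          exact lintegral_lintegral_swap hWmeas.aemeasurable
      _ = ∫⁻ z, ENNReal.ofReal (f' z) * ∫⁻ θ, ENNReal.ofReal
            ((‖x + (4:ℝ) • (θ : EuclideanSpace ℝ (Fin n)) - z‖ ^ (2*i))⁻¹) ∂σ := by
          apply lintegral_congr
          intro z
          apply lintegral_const_mul
          have hc : Continuous (fun θ : Metric.sphere (0:EuclideanSpace ℝ (Fin n)) 1 =>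
              ‖x + (4:ℝ) • (θ : EuclideanSpace ℝ (Fin n)) - z‖ ^ (2*i)) := by
            apply Continuous.pow
            exact ((continuous_const.add
              (continuous_subtype_val.const_smul (4:ℝ))).sub continuous_const).norm
          exact (hc.measurable.inv).ennreal_ofReal
      _ ≤ ∫⁻ z, ENNReal.ofReal (f' z) * Kc n := by
          apply lintegral_mono
          intro z
          apply mul_le_mul_right
          have hrw : ∀ θ : Metric.sphere (0:EuclideanSpace ℝ (Fin n)) 1,
              ‖x + (4:ℝ) • (θ : EuclideanSpace ℝ (Fin n)) - z‖
                = ‖(z - x) - (4:ℝ) • (θ : EuclideanSpace ℝ (Fin n))‖ := by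
            intro θ
            rw [show (z - x) - (4:ℝ) • (θ : EuclideanSpace ℝ (Fin n))
              = -(x + (4:ℝ) • (θ : EuclideanSpace ℝ (Fin n)) - z) by abel, norm_neg]
          calc ∫⁻ θ, ENNReal.ofReal
                ((‖x + (4:ℝ) • (θ : EuclideanSpace ℝ (Fin n)) - z‖ ^ (2*i))⁻¹) ∂σ
              = ∫⁻ θ, ENNReal.ofReal
                ((‖(z - x) - (4:ℝ) • (θ : EuclideanSpace ℝ (Fin n))‖ ^ (2*i))⁻¹) ∂σ := by
                apply lintegral_congr
                intro θ
                rw [hrw θ]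
            _ ≤ Kc n := sphere_kernel4 n (2*i) hn4 hα1 hα2 (z - x)
      _ = Kc n * ∫⁻ z, ENNReal.ofReal (f' z) := by
          rw [lintegral_mul_const _ hf'meas.ennreal_ofReal, mul_comm]
  -- finiteness of Φ at relevant points
  have hfin : ∀ (i : ℕ), 1 ≤ i → i ≤ m - 1 → ∀ y, Φ i y < ⊤ := by
    intro i hi1 hi2 y
    by_contra htop
    have htop' : Φ i y = ⊤ := top_le_iff.mp (not_lt.mp htop)
    have h0 : (∫ z, f z / ‖y - z‖ ^ (2*i)) = 0 := by
      rw [hlink i y, htop', ENNReal.toReal_top]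
    have heq := (hformula i hi1 hi2 y).1
    have hgt := (hformula i hi1 hi2 y).2
    rw [heq, h0, mul_zero] at hgt
    exact lt_irrefl 0 hgt
  -- the constant
  have hω : 0 < omegaN n := omegaN_pos n hn4
  have hKI : Kc n * ∫⁻ z, ENNReal.ofReal (f' z) < ⊤ :=
    ENNReal.mul_lt_top (Kc_lt_top n) hIf
  set B : ℝ := (Kc n * ∫⁻ z, ENNReal.ofReal (f' z)).toReal with hBdef
  have hB : 0 ≤ B := ENNReal.toReal_nonneg
  set C : ℝ := ∑ i ∈ Finset.Icc 1 (m-1), (|dCoeff n i| / cconst n) * B / omegaN n with hCdef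
  refine ⟨C, fun x i hi1 hi2 => ?_⟩
  have hc0 : 0 ≤ |dCoeff n i| / cconst n := div_nonneg (abs_nonneg _) (cconst_pos n).le
  -- the integrand
  set g : Metric.sphere (0:EuclideanSpace ℝ (Fin n)) 1 → ℝ := fun θ =>
    -(negLapIter i (logPot n f) (x + (4:ℝ) • (θ : EuclideanSpace ℝ (Fin n)))) with hgdef
  have hgeq : ∀ θ, g θ = (|dCoeff n i| / cconst n)
      * (Φ i (x + (4:ℝ) • (θ : EuclideanSpace ℝ (Fin n)))).toReal := by
    intro θ
    rw [hgdef]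
    simp only
    rw [(hformula i hi1 hi2 _).1, hlink i _]
  have hgpos : ∀ θ, 0 < g θ := fun θ => (hformula i hi1 hi2 _).2
  -- measurability of the lintegral integrand over the sphere
  have hΦθmeas : Measurable (fun θ : Metric.sphere (0:EuclideanSpace ℝ (Fin n)) 1 =>
      Φ i (x + (4:ℝ) • (θ : EuclideanSpace ℝ (Fin n)))) := by
    apply (hΦmeas i).comp
    exact (continuous_const.add (continuous_subtype_val.const_smul (4:ℝ))).measurable
  have hltop : ∫⁻ θ, Φ i (x + (4:ℝ) • (θ : EuclideanSpace ℝ (Fin n))) ∂σ ≠ ⊤ :=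
    ((hiK i hi1 hi2 x).trans_lt hKI).ne
  have hgint : Integrable g σ := by
    have h1 : Integrable (fun θ : Metric.sphere (0:EuclideanSpace ℝ (Fin n)) 1 =>
        (Φ i (x + (4:ℝ) • (θ : EuclideanSpace ℝ (Fin n)))).toReal) σ :=
      integrable_toReal_of_lintegral_ne_top hΦθmeas.aemeasurable hltop
    have h2 := h1.const_mul (|dCoeff n i| / cconst n)
    apply h2.congr
    filter_upwards with θ
    rw [hgeq θ]
  -- value of the integral
  have hval : ∫ θ, g θ ∂σ = (|dCoeff n i| / cconst n)
      * (∫⁻ θ, Φ i (x + (4:ℝ) • (θ : EuclideanSpace ℝ (Fin n))) ∂σ).toReal := by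
    rw [integral_congr_ae (Eventually.of_forall hgeq), MeasureTheory.integral_const_mul]
    congr 1
    exact integral_toReal hΦθmeas.aemeasurable
      (Eventually.of_forall fun θ => hfin i hi1 hi2 _)
  -- positivity
  have hintpos : 0 < ∫ θ, g θ ∂σ := by
    rw [integral_pos_iff_support_of_nonneg (fun θ => (hgpos θ).le) hgint]
    have hsupp : Function.support g = Set.univ :=
      Set.eq_univ_iff_forall.mpr fun θ => (hgpos θ).ne'
    rw [hsupp]
    exact sphereMeasure_univ_pos n hn4
  -- upper bound
  have hle : ∫ θ, g θ ∂σ ≤ (|dCoeff n i| / cconst n) * B := by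
    rw [hval]
    apply mul_le_mul_of_nonneg_left _ hc0
    exact ENNReal.toReal_mono hKI.ne (hiK i hi1 hi2 x)
  -- conclude
  have havg : sphereAvg n (fun y => -(negLapIter i (logPot n f) (x + y))) 4
      = (∫ θ, g θ ∂σ) / omegaN n := rfl
  constructor
  · rw [havg]
    exact div_pos hintpos hω
  · rw [havg]
    have h1 : (∫ θ, g θ ∂σ) / omegaN n ≤ (|dCoeff n i| / cconst n) * B / omegaN n := by
      gcongr
    refine h1.trans ?_
    apply Finset.single_le_sum (f := fun j => (|dCoeff n j| / cconst n) * B / omegaN n)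
    · intro j _
      exact div_nonneg (mul_nonneg (div_nonneg (abs_nonneg _) (cconst_pos n).le) hB) hω.le
    · exact Finset.mem_Icc.mpr ⟨hi1, hi2⟩
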